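/- Let f ∈ ℂ[z₁,…,z_n] be a stable polynomial. Then for each j, the partial derivative ∂f/∂z_j is either identically zero or stable. -/

import Mathlib

noncomputable def substPoly {n : ℕ} (z : Fin n → ℂ) (j : Fin n) :
    MvPolynomial (Fin n) ℂ →ₐ[ℂ] Polynomial ℂ :=
  MvPolynomial.aeval (fun i => if i = j then Polynomial.X else Polynomial.C (z i))

lemma substPoly_eval {n : ℕ} (z : Fin n → ℂ) (j : Fin n) (f : MvPolynomial (Fin n) ℂ) (w : ℂ) :
    Polynomial.eval w (substPoly z j f) = MvPolynomial.eval (Function.update z j w) f := by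
  induction f using MvPolynomial.induction_on with
  | C c => simp [substPoly]
  | add p q hp hq => simp [map_add, hp, hq]
  | mul_X p i hp =>
    simp only [map_mul, Polynomial.eval_mul, hp, substPoly, MvPolynomial.aeval_X,
      MvPolynomial.eval_mul, MvPolynomial.eval_X]
    congr 1
    by_cases h : i = j <;> simp [h, Function.update_apply]

lemma substPoly_deriv {n : ℕ} (z : Fin n → ℂ) (j : Fin n) (f : MvPolynomial (Fin n) ℂ) :
    Polynomial.derivative (substPoly z j f) = substPoly z j (MvPolynomial.pderiv j f) := by
  induction f using MvPolynomial.induction_on with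
  | C c => simp [substPoly]
  | add p q hp hq => simp [map_add, hp, hq]
  | mul_X p i hp =>
    simp only [map_mul, Polynomial.derivative_mul, hp, MvPolynomial.pderiv_mul, map_add]
    by_cases h : i = j <;>
      simp [substPoly, h, Pi.single_apply, MvPolynomial.pderiv_X]

open Polynomial in
lemma univ_logderiv_im (N : ℕ) : ∀ p : Polynomial ℂ, p.natDegree ≤ N →
    (∀ w : ℂ, 0 < w.im → p.eval w ≠ 0) →
    ∀ w : ℂ, 0 < w.im → ((Polynomial.derivative p).eval w / p.eval w).im ≤ 0 := by
  induction N with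
  | zero =>
    intro p hdeg _ w _
    obtain ⟨c, rfl⟩ := Polynomial.natDegree_eq_zero.mp (Nat.le_zero.mp hdeg)
    simp
  | succ N ih =>
    intro p hdeg hnv w hw
    by_cases h0 : p.natDegree = 0
    · obtain ⟨c, rfl⟩ := Polynomial.natDegree_eq_zero.mp h0
      simp
    · have hdegpos : 0 < p.degree := Polynomial.natDegree_pos_iff_degree_pos.mp (Nat.pos_of_ne_zero h0)
      obtain ⟨r, hr⟩ := Complex.exists_root hdegpos
      have hrim : r.im ≤ 0 := by
        by_contra h
        exact hnv r (lt_of_not_ge h) hr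
      obtain ⟨q, hq⟩ := Polynomial.dvd_iff_isRoot.mpr hr
      have hp0 : p ≠ 0 := fun h => h0 (by simp [h])
      have hq0 : q ≠ 0 := by rintro rfl; rw [mul_zero] at hq; exact hp0 hq
      have hXC : (X - C r) ≠ (0 : Polynomial ℂ) := Polynomial.X_sub_C_ne_zero r
      have hdq : q.natDegree ≤ N := by
        have := Polynomial.natDegree_mul hXC hq0
        rw [← hq, Polynomial.natDegree_X_sub_C] at this
        omega
      have hqnv : ∀ w : ℂ, 0 < w.im → q.eval w ≠ 0 := by
        intro w hw hz
        exact hnv w hw (by rw [hq]; simp [hz])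
      have key := ih q hdq hqnv w hw
      have hwrim : 0 < (w - r).im := by rw [Complex.sub_im]; linarith
      have hwr : w - r ≠ 0 := fun h => by rw [h] at hwrim; simp at hwrim
      have hqw : q.eval w ≠ 0 := hqnv w hw
      have hsplit : (Polynomial.derivative p).eval w / p.eval w
          = (w - r)⁻¹ + (Polynomial.derivative q).eval w / q.eval w := by
        rw [hq]
        simp only [Polynomial.derivative_mul, Polynomial.derivative_sub,
          Polynomial.derivative_X, Polynomial.derivative_C, sub_zero, one_mul,
          Polynomial.eval_add, Polynomial.eval_mul, Polynomial.eval_sub,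
          Polynomial.eval_X, Polynomial.eval_C]
        field_simp
      rw [hsplit, Complex.add_im]
      have h1 : ((w - r)⁻¹).im ≤ 0 := by
        rw [Complex.inv_im]
        apply div_nonpos_of_nonpos_of_nonneg
        · linarith
        · exact Complex.normSq_nonneg _
      linarith

/-- A polynomial `f ∈ ℂ[z₁,…,zₙ]` is stable if it does not vanish whenever all
variables have positive imaginary part. -/
def MvStable {n : ℕ} (f : MvPolynomial (Fin n) ℂ) : Prop :=
  ∀ z : Fin n → ℂ, (∀ j, 0 < (z j).im) → MvPolynomial.eval z f ≠ 0

theorem stmt6 (n : ℕ) (f : MvPolynomial (Fin n) ℂ) (hf : MvStable f) (j : Fin n) :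
    MvPolynomial.pderiv j f = 0 ∨ MvStable (MvPolynomial.pderiv j f) := by
  by_cases hg : MvPolynomial.pderiv j f = 0
  · exact Or.inl hg
  right
  intro a ha hga
  apply hg
  set g := MvPolynomial.pderiv j f with hgdef
  set U : Set (Fin n → ℂ) := {z | ∀ i, 0 < (z i).im} with hUdef
  have haU : a ∈ U := ha
  have hopen : IsOpen U := by
    have hU2 : U = ⋂ i, (fun z : Fin n → ℂ => (z i).im) ⁻¹' Set.Ioi 0 := by
      ext z; simp [hUdef, Set.mem_iInter]
    rw [hU2]
    exact isOpen_iInter_of_finite fun i =>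
      (Complex.continuous_im.comp (continuous_apply i)).isOpen_preimage _ isOpen_Ioi
  have hconv : Convex ℝ U := by
    intro z hz w hw s t hs ht hst i
    have hzi := hz i
    have hwi := hw i
    have him : ((s • z + t • w) i).im = s * (z i).im + t * (w i).im := by
      simp [Complex.add_im, Complex.smul_im]
    show 0 < ((s • z + t • w) i).im
    rw [him]
    rcases eq_or_lt_of_le hs with h | h
    · have ht1 : t = 1 := by linarith
      rw [← h, ht1]; simpa using hwi
    · nlinarith [mul_nonneg ht hwi.le]
  have hconn : IsPreconnected U := hconv.isPreconnected
  set F : (Fin n → ℂ) → ℂ := fun z => MvPolynomial.eval z f with hFdef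
  set G : (Fin n → ℂ) → ℂ := fun z => MvPolynomial.eval z g with hGdef
  have hFne : ∀ z ∈ U, F z ≠ 0 := fun z hz => hf z hz
  have hFan : AnalyticOnNhd ℂ F Set.univ := AnalyticOnNhd.eval_mvPolynomial f
  have hGan : AnalyticOnNhd ℂ G Set.univ := AnalyticOnNhd.eval_mvPolynomial g
  have hFd : Differentiable ℂ F := fun x => (hFan x (Set.mem_univ x)).differentiableAt
  have hGd : Differentiable ℂ G := fun x => (hGan x (Set.mem_univ x)).differentiableAt
  set v : (Fin n → ℂ) → ℂ := fun z => G z / F z with hvdef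
  have hvim : ∀ z ∈ U, (v z).im ≤ 0 := by
    intro z hz
    have hnv : ∀ w : ℂ, 0 < w.im → (substPoly z j f).eval w ≠ 0 := by
      intro w hw
      rw [substPoly_eval]
      apply hf
      intro i
      rcases eq_or_ne i j with rfl | hij
      · simpa using hw
      · simpa [Function.update_apply, hij] using hz i
    have key := univ_logderiv_im (substPoly z j f).natDegree (substPoly z j f) le_rfl hnv
      (z j) (hz j)
    rw [substPoly_deriv, substPoly_eval, substPoly_eval, Function.update_eq_self] at key
    exact key
  set h : (Fin n → ℂ) → ℂ := fun z => Complex.exp (-Complex.I * v z) with hhdef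
  have hnorm : ∀ z, ‖h z‖ = Real.exp ((v z).im) := by
    intro z
    rw [hhdef]
    simp only [Complex.norm_exp]
    congr 1
    simp [Complex.mul_re]
  have hva : v a = 0 := by
    rw [hvdef]
    simp only
    rw [hGdef]
    simp only
    rw [hga, zero_div]
  have hmax : IsMaxOn (norm ∘ h) U a := by
    intro z hz
    simp only [Function.comp_apply, hnorm, hva, Complex.zero_im,
      Real.exp_zero, Set.mem_setOf_eq]
    calc Real.exp ((v z).im) ≤ Real.exp 0 := Real.exp_le_exp.mpr (hvim z hz)
    _ = 1 := Real.exp_zero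
  have hvd : DifferentiableOn ℂ v U := by
    have : v = fun z => G z * (F z)⁻¹ := by
      funext z; rw [hvdef]; simp [div_eq_mul_inv]
    rw [this]
    exact fun z hz => ((hGd z).differentiableWithinAt).mul
      (((hFd z).differentiableWithinAt).inv (hFne z hz))
  have hhd : DifferentiableOn ℂ h U := by
    apply DifferentiableOn.cexp
    exact hvd.const_mul _
  have heqOn := Complex.eqOn_of_isPreconnected_of_isMaxOn_norm hconn hopen hhd haU hmax
  have hha : h a = 1 := by rw [hhdef]; simp [hva]
  have hvcont : ContinuousAt v a :=
    ContinuousAt.div (hGd.continuous.continuousAt) (hFd.continuous.continuousAt) (hFne a haU)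
  have hsmall : ∀ᶠ z in nhds a, ‖v z‖ < 1 := by
    have hca : ContinuousAt (fun z => ‖v z‖) a :=
      continuous_norm.continuousAt.comp hvcont
    have h0 : ‖v a‖ < 1 := by rw [hva]; simp
    exact hca.eventually_lt continuousAt_const h0
  have hGz : G =ᶠ[nhds a] 0 := by
    filter_upwards [hopen.mem_nhds haU, hsmall] with z hzU hzs
    have h1 : h z = 1 := by rw [heqOn hzU, hha]; rfl
    rw [hhdef] at h1
    obtain ⟨m, hm⟩ := Complex.exp_eq_one_iff.mp h1
    have habs : ‖v z‖ = 2 * Real.pi * |(m : ℝ)| := by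
      calc ‖v z‖ = ‖-Complex.I * v z‖ := by
            rw [norm_mul]; simp
      _ = ‖(m : ℂ) * (2 * Real.pi * Complex.I)‖ := by rw [hm]
      _ = 2 * Real.pi * |(m : ℝ)| := by
            simp only [norm_mul, Complex.norm_intCast, Complex.norm_I, Complex.norm_real,
              Complex.norm_two, mul_one, Real.norm_eq_abs]
            rw [abs_of_pos Real.pi_pos]
            ring
    have hm0 : m = 0 := by
      by_contra hm0
      have h1abs : (1 : ℝ) ≤ |(m : ℝ)| := by
        have : (1 : ℤ) ≤ |m| := Int.one_le_abs hm0
        exact_mod_cast this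
      rw [habs] at hzs
      nlinarith [Real.pi_gt_three]
    rw [hm0] at hm
    simp only [Int.cast_zero, zero_mul] at hm
    have hvz : v z = 0 := by
      rcases mul_eq_zero.mp hm with h' | h'
      · exact absurd h' (by simp [Complex.I_ne_zero])
      · exact h'
    have : G z / F z = 0 := hvz
    rcases div_eq_zero_iff.mp this with h' | h'
    · exact h'
    · exact absurd h' (hFne z hzU)
  have hGzero : Set.EqOn G 0 Set.univ :=
    hGan.eqOn_zero_of_preconnected_of_eventuallyEq_zero isPreconnected_univ
      (Set.mem_univ a) hGz
  apply MvPolynomial.funext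
  intro x
  simpa using hGzero (Set.mem_univ x)
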